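/- Suppose the sequences (a_n) and (b_n) of positive reals satisfy, for n ≥ n_0, the recursions a_{n+1} = (1-η_n)^2 a_n + θ^2 b_n and b_{n+1} = (1-η_{n+1}) b_n + η_{n+1} a_{n+1}, where η_n ∈ (0,1) with η_n → 0, θ > 0, a_{n_0} ≥ 0 and b_{n_0} > 0. Then there exists m_0 ≥ n_0 such that the sequence (b_n)_{n ≥ m_0} is strictly increasing. -/
import Mathlib

set_option maxHeartbeats 1000000


/-- If the sequences `a`, `b` of reals satisfy the coupled recursions
`a (n+1) = (1-η n)^2 * a n + θ^2 * b n` and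
`b (n+1) = (1-η (n+1)) * b n + η (n+1) * a (n+1)` for `n ≥ n₀`,
with `η n ∈ (0,1)`, `η n → 0`, `θ > 0`, `a n₀ ≥ 0` and `b n₀ > 0`,
then there is `m₀ ≥ n₀` such that `(b n)` is strictly increasing for `n ≥ m₀`. -/
theorem am_tail_increasing (a b η : ℕ → ℝ) (θ : ℝ) (n₀ : ℕ)
    (hη : ∀ n, 0 < η n ∧ η n < 1)
    (hηlim : Filter.Tendsto η Filter.atTop (nhds 0))
    (hθ : 0 < θ)
    (ha0 : 0 ≤ a n₀) (hb0 : 0 < b n₀)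
    (hreca : ∀ n ≥ n₀, a (n + 1) = (1 - η n) ^ 2 * a n + θ ^ 2 * b n)
    (hrecb : ∀ n ≥ n₀, b (n + 1) = (1 - η (n + 1)) * b n + η (n + 1) * a (n + 1)) :
    ∃ m₀ ≥ n₀, ∀ n ≥ m₀, b n < b (n + 1) := by
  have hpos : ∀ n, n₀ ≤ n → 0 ≤ a n ∧ 0 < b n := by
    intro n
    induction n with
    | zero =>
      intro hn
      have h0 : n₀ = 0 := Nat.le_zero.mp hn
      exact h0 ▸ ⟨ha0, hb0⟩
    | succ k ih =>
      intro hn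
      rcases eq_or_lt_of_le hn with h | h
      · exact h ▸ ⟨ha0, hb0⟩
      · have hk : n₀ ≤ k := Nat.lt_succ_iff.mp h
        obtain ⟨hak, hbk⟩ := ih hk
        obtain ⟨hη1, hη2⟩ := hη (k+1)
        have ha1 : 0 ≤ a (k+1) := by
          rw [hreca k hk]
          have := sq_nonneg (1 - η k)
          nlinarith
        have hb1 : 0 < b (k+1) := by
          rw [hrecb k hk]
          nlinarith
        exact ⟨ha1, hb1⟩
  set ε : ℝ := min (θ^2/2) (1/2) with hεdef
  have hε0 : 0 < ε := lt_min (by positivity) (by norm_num)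
  have hε1 : ε ≤ 1/2 := min_le_right _ _
  have h2ε : 2*ε ≤ θ^2 := by
    have h := min_le_left (θ^2/2) (1/2)
    rw [← hεdef] at h; linarith
  set δ : ℝ := min (ε/2) (1/(2+ε)) with hδdef
  have hδ0 : 0 < δ := lt_min (by positivity) (by positivity)
  obtain ⟨N₁, hN₁⟩ := Filter.eventually_atTop.mp (hηlim.eventually (gt_mem_nhds hδ0))
  set N := max N₁ n₀ with hN
  have hNn₀ : n₀ ≤ N := le_max_right _ _
  have hηsmall : ∀ m, N ≤ m → η m ≤ ε/2 ∧ η m * (2+ε) ≤ 1 := by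
    intro m hm
    have h1 : η m < δ := hN₁ m (le_trans (le_max_left _ _) hm)
    have h2 : η m < 1/(2+ε) := lt_of_lt_of_le h1 (min_le_right _ _)
    have h3 : (0:ℝ) < 2+ε := by linarith
    refine ⟨le_trans h1.le (min_le_left _ _), ?_⟩
    calc η m * (2+ε) ≤ (1/(2+ε)) * (2+ε) := by nlinarith [(hη m).1]
      _ = 1 := by field_simp
  have hsq : ∀ m, N ≤ m → 1 - ε ≤ (1 - η m)^2 := by
    intro m hm
    have h1 := (hηsmall m hm).1
    have h2 := (hη m).1
    nlinarith
  -- there exists a "good" point where a (n+1) ≥ (1+ε) * b n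
  have hgood : ∃ n, N ≤ n ∧ (1+ε) * b n ≤ a (n+1) := by
    by_contra hbad
    push_neg at hbad
    have hlt : ∀ n, N ≤ n → a n < b n := by
      intro n hn
      have hb := hbad n hn
      have hr := hreca n (le_trans hNn₀ hn)
      obtain ⟨han, hbn⟩ := hpos n (le_trans hNn₀ hn)
      have hs := hsq n hn
      nlinarith
    have hgrow : ∀ k : ℕ, ((k : ℝ) * (ε/2)) * b (N+k) ≤ a (N+k) := by
      intro k
      induction k with
      | zero => simpa using (hpos N hNn₀).1
      | succ k ih =>
        have hn : N ≤ N + k := Nat.le_add_right _ _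
        have hn' : N ≤ N + k + 1 := by omega
        obtain ⟨han, hbn⟩ := hpos (N+k) (le_trans hNn₀ hn)
        have haltb := hlt (N+k) hn
        have ht1 : (k:ℝ) * (ε/2) < 1 := by nlinarith
        have hra := hreca (N+k) (le_trans hNn₀ hn)
        have hrb := hrecb (N+k) (le_trans hNn₀ hn)
        have hs := hsq (N+k) hn
        have hbadn := hbad (N+k) hn
        obtain ⟨hη1, hη2⟩ := hη (N+k+1)
        have hsm := (hηsmall (N+k+1) hn').2
        have hkε : (0:ℝ) ≤ (k:ℝ) * (ε/2) := by positivity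
        have hb1 : b (N+k+1) ≤ (1 + η (N+k+1) * ε) * b (N+k) := by
          rw [hrb]; nlinarith
        have ha1 : ((1-ε) * ((k:ℝ)*(ε/2)) + 2*ε) * b (N+k) ≤ a (N+k+1) := by
          rw [hra]; nlinarith
        have hb1pos := (hpos (N+k+1) (le_trans hNn₀ hn')).2
        have hstep : ((k:ℝ)*(ε/2) + ε/2) * b (N+k+1) ≤ a (N+k+1) := by
          set t : ℝ := (k:ℝ)*(ε/2) with htdef
          have hq : η (N+k+1) * (t + ε/2) ≤ 1/2 := by
            have hmul := mul_le_mul_of_nonneg_left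
              (show t + ε/2 ≤ (2+ε)/2 by linarith) hη1.le
            linarith
          have hscalar : (t + ε/2) * (1 + η (N+k+1) * ε) ≤ (1-ε) * t + 2*ε := by
            nlinarith [mul_nonneg hε0.le
              (show (0:ℝ) ≤ 3/2 - t - η (N+k+1) * (t + ε/2) by linarith)]
          have hnn : (0:ℝ) ≤ t + ε/2 := by positivity
          calc (t + ε/2) * b (N+k+1)
              ≤ (t + ε/2) * ((1 + η (N+k+1) * ε) * b (N+k)) :=
                mul_le_mul_of_nonneg_left hb1 hnn
            _ = ((t + ε/2) * (1 + η (N+k+1) * ε)) * b (N+k) := by ring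
            _ ≤ ((1-ε) * t + 2*ε) * b (N+k) :=
                mul_le_mul_of_nonneg_right hscalar hbn.le
            _ ≤ a (N+k+1) := ha1
        have : ((k+1:ℕ):ℝ) * (ε/2) = (k:ℝ)*(ε/2) + ε/2 := by push_cast; ring
        rw [show N + (k+1) = N + k + 1 from rfl, this]
        exact hstep
    obtain ⟨k, hk⟩ : ∃ k : ℕ, (1:ℝ) ≤ (k:ℝ) * (ε/2) := by
      refine ⟨⌈2/ε⌉₊, ?_⟩
      have h1 := Nat.le_ceil (2/ε)
      have h2 : (2:ℝ)/ε * (ε/2) = 1 := by field_simp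
      nlinarith
    have h1 := hgrow k
    have h2 := hlt (N+k) (Nat.le_add_right _ _)
    have h3 := (hpos (N+k) (le_trans hNn₀ (Nat.le_add_right _ _))).2
    nlinarith
  obtain ⟨n, hnN, hgoodn⟩ := hgood
  have hpers : ∀ m, n ≤ m → (1+ε) * b m ≤ a (m+1) := by
    intro m hm
    induction m with
    | zero =>
      have h0 : n = 0 := Nat.le_zero.mp hm
      exact h0 ▸ hgoodn
    | succ k ih =>
      rcases eq_or_lt_of_le hm with h | h
      · exact h ▸ hgoodn
      · have hk : n ≤ k := Nat.lt_succ_iff.mp h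
        have hgk := ih hk
        have hkN : N ≤ k := le_trans hnN hk
        have hkn₀ : n₀ ≤ k := le_trans hNn₀ hkN
        obtain ⟨hak, hbk⟩ := hpos k hkn₀
        obtain ⟨hη1, hη2⟩ := hη (k+1)
        have hrb := hrecb k hkn₀
        have hba : b (k+1) ≤ a (k+1) := by
          have hb' : b k ≤ a (k+1) := by nlinarith
          rw [hrb]; nlinarith
        have hra := hreca (k+1) (by omega)
        have hs := hsq (k+1) (by omega)
        have hb1 := (hpos (k+1) (by omega)).2
        have ha1 : 0 ≤ a (k+1) := le_trans hb1.le hba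
        rw [hra]
        nlinarith
  refine ⟨n, le_trans hNn₀ hnN, ?_⟩
  intro m hm
  have hg := hpers m hm
  have hmn₀ : n₀ ≤ m := le_trans (le_trans hNn₀ hnN) hm
  obtain ⟨ham, hbm⟩ := hpos m hmn₀
  obtain ⟨hη1, hη2⟩ := hη (m+1)
  rw [hrecb m hmn₀]
  have h4 : b m < a (m+1) := by nlinarith
  nlinarith [mul_pos hη1 (sub_pos.mpr h4)]
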